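/- In the discrete-time standard Dynkin game with X ≤ Z ≤ Y, the value process V stopped at τ*_t ∧ σ*_t is a martingale on {t,...,T}: for t ≤ s < T, E[V_{(s+1) ∧ τ*_t ∧ σ*_t} | F_s] = V_{s ∧ τ*_t ∧ σ*_t}. -/

import Mathlib

open MeasureTheory Filter Set

/-- In the discrete-time standard Dynkin game with `X ≤ Z ≤ Y`, the value process `V`
stopped at `τ*_t ∧ σ*_t` is a martingale on `{t, ..., T}`: for `t ≤ s < T`,
`E[V_{(s+1) ∧ τ*_t ∧ σ*_t} | ℱ s] = V_{s ∧ τ*_t ∧ σ*_t}` a.s. -/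
theorem stmt4 {Ω : Type*} {m0 : MeasurableSpace Ω} (μ : Measure Ω) [IsProbabilityMeasure μ]
    (ℱ : Filtration ℕ m0) (T : ℕ)
    (X Y Z V : ℕ → Ω → ℝ)
    (hXa : Adapted ℱ X) (hYa : Adapted ℱ Y) (hZa : Adapted ℱ Z)
    (hXi : ∀ t, Integrable (X t) μ) (hYi : ∀ t, Integrable (Y t) μ)
    (hZi : ∀ t, Integrable (Z t) μ) (hVi : ∀ t, Integrable (V t) μ)
    (hXZ : ∀ t ω, X t ω ≤ Z t ω) (hZY : ∀ t ω, Z t ω ≤ Y t ω)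
    (htermX : ∀ ω, X T ω = Z T ω) (htermY : ∀ ω, Z T ω = Y T ω)
    (hVT : ∀ ω, V T ω = Z T ω)
    (hV : ∀ t, t < T → ∀ ω, V t ω = min (Y t ω) (max (X t ω) ((μ[V (t + 1) | ℱ t]) ω)))
    (t : ℕ) (ht : t ≤ T)
    (τs σs : Ω → ℕ)
    (hτs : ∀ ω, τs ω = sInf {u | t ≤ u ∧ u ≤ T ∧ V u ω = X u ω})
    (hσs : ∀ ω, σs ω = sInf {u | t ≤ u ∧ u ≤ T ∧ V u ω = Y u ω}) :
    ∀ s, t ≤ s → s < T →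
      (μ[fun ω => V (min (s + 1) (min (τs ω) (σs ω))) ω | ℱ s])
        =ᵐ[μ] fun ω => V (min s (min (τs ω) (σs ω))) ω := by
  -- measurability of V
  have hVm : ∀ u, u ≤ T → StronglyMeasurable[ℱ u] (V u) := by
    intro u hu
    rcases lt_or_eq_of_le hu with hu | hu
    · have : V u = fun ω => min (Y u ω) (max (X u ω) ((μ[V (u + 1) | ℱ u]) ω)) :=
        funext (hV u hu)
      rw [this]
      exact @StronglyMeasurable.inf _ _ _ _ (ℱ u) _ _ _ (hYa u).stronglyMeasurable
        (@StronglyMeasurable.sup _ _ _ _ (ℱ u) _ _ _ (hXa u).stronglyMeasurable stronglyMeasurable_condExp)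
    · subst hu
      have : V u = Z u := funext hVT
      rw [this]; exact (hZa u).stronglyMeasurable
  -- τs facts
  have hτXne : ∀ ω, ({u | t ≤ u ∧ u ≤ T ∧ V u ω = X u ω} : Set ℕ).Nonempty := by
    intro ω
    exact ⟨T, ht, le_rfl, by rw [hVT ω, htermX ω]⟩
  have hσYne : ∀ ω, ({u | t ≤ u ∧ u ≤ T ∧ V u ω = Y u ω} : Set ℕ).Nonempty := by
    intro ω
    exact ⟨T, ht, le_rfl, by rw [hVT ω, htermY ω]⟩
  have hτmem : ∀ ω, t ≤ τs ω ∧ τs ω ≤ T ∧ V (τs ω) ω = X (τs ω) ω := by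
    intro ω; rw [hτs ω]; exact Nat.sInf_mem (hτXne ω)
  have hσmem : ∀ ω, t ≤ σs ω ∧ σs ω ≤ T ∧ V (σs ω) ω = Y (σs ω) ω := by
    intro ω; rw [hσs ω]; exact Nat.sInf_mem (hσYne ω)
  have hτle : ∀ ω u, t ≤ u → u ≤ T → V u ω = X u ω → τs ω ≤ u := by
    intro ω u h1 h2 h3; rw [hτs ω]; exact Nat.sInf_le ⟨h1, h2, h3⟩
  have hσle : ∀ ω u, t ≤ u → u ≤ T → V u ω = Y u ω → σs ω ≤ u := by
    intro ω u h1 h2 h3; rw [hσs ω]; exact Nat.sInf_le ⟨h1, h2, h3⟩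
  intro s hts hsT
  set φ : Ω → ℕ := fun ω => min (τs ω) (σs ω) with hφ
  have hsTle : s ≤ T := hsT.le
  -- the "stopped" events
  set S : ℕ → Set Ω := fun u => {ω | V u ω = X u ω ∨ V u ω = Y u ω} with hS
  have hSm : ∀ u, u ≤ s → MeasurableSet[ℱ s] (S u) := by
    intro u hu
    have hVu : StronglyMeasurable[ℱ s] (V u) :=
      (hVm u (hu.trans hsTle)).mono (ℱ.mono hu)
    have hXu : StronglyMeasurable[ℱ s] (X u) := (hXa u).stronglyMeasurable.mono (ℱ.mono hu)
    have hYu : StronglyMeasurable[ℱ s] (Y u) := (hYa u).stronglyMeasurable.mono (ℱ.mono hu)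
    exact (measurableSet_eq_fun hVu.measurable hXu.measurable).union
      (measurableSet_eq_fun hVu.measurable hYu.measurable)
  -- characterization of {φ ≤ u} for u ≤ T
  have hDiff : ∀ u, u ≤ T → ∀ ω, φ ω ≤ u ↔ ∃ v, t ≤ v ∧ v ≤ u ∧ ω ∈ S v := by
    intro u hu ω
    constructor
    · intro h
      rcases min_le_iff.mp h with h | h
      · exact ⟨τs ω, (hτmem ω).1, h, Or.inl (hτmem ω).2.2⟩
      · exact ⟨σs ω, (hσmem ω).1, h, Or.inr (hσmem ω).2.2⟩
    · rintro ⟨v, h1, h2, h3 | h3⟩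
      · exact le_trans (min_le_left _ _) (le_trans (hτle ω v h1 (h2.trans hu) h3) h2)
      · exact le_trans (min_le_right _ _) (le_trans (hσle ω v h1 (h2.trans hu) h3) h2)
  have hD : ∀ u, u ≤ s → MeasurableSet[ℱ s] {ω | φ ω ≤ u} := by
    intro u hu
    have : {ω | φ ω ≤ u} = ⋃ v ∈ Finset.Icc t u, S v := by
      ext ω
      simp only [Set.mem_setOf_eq, Set.mem_iUnion, Finset.mem_Icc, exists_prop]
      rw [hDiff u (hu.trans hsTle) ω]
      constructor
      · rintro ⟨v, h1, h2, h3⟩; exact ⟨v, ⟨h1, h2⟩, h3⟩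
      · rintro ⟨v, ⟨h1, h2⟩, h3⟩; exact ⟨v, h1, h2, h3⟩
    rw [this]
    refine MeasurableSet.biUnion (Finset.Icc t u).countable_toSet ?_
    intro v hv
    exact hSm v ((Finset.mem_Icc.mp hv).2.trans hu)
  have hDlt : ∀ u, MeasurableSet[ℱ s] {ω | φ ω < u} → True := fun _ _ => trivial
  -- measurability of {φ < u} for u ≤ s + 1
  have hDlt : ∀ u, u ≤ s + 1 → MeasurableSet[ℱ s] {ω | φ ω < u} := by
    intro u hu
    have : {ω | φ ω < u} = ⋃ v ∈ Finset.range u, {ω | φ ω ≤ v} := by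
      ext ω
      simp only [Set.mem_setOf_eq, Set.mem_iUnion, Finset.mem_range, exists_prop]
      constructor
      · intro h; exact ⟨φ ω, h, le_rfl⟩
      · rintro ⟨v, h1, h2⟩; exact lt_of_le_of_lt h2 h1
    rw [this]
    refine MeasurableSet.biUnion (Finset.range u).countable_toSet ?_
    intro v hv
    exact hD v (Nat.lt_succ_iff.mp (lt_of_lt_of_le (Finset.mem_range.mp hv) hu))
  set ψ : Ω → ℕ := fun ω => min s (φ ω) with hψ
  -- measurability of {ψ = u}
  have hC : ∀ u, u ≤ s → MeasurableSet[ℱ s] {ω | ψ ω = u} := by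
    intro u hu
    rcases lt_or_eq_of_le hu with hu | hu
    · have : {ω | ψ ω = u} = {ω | φ ω ≤ u} \ {ω | φ ω < u} := by
        ext ω
        simp only [Set.mem_setOf_eq, Set.mem_diff, not_lt]
        constructor
        · intro h
          have h2 : φ ω = u := by
            rcases le_or_gt (φ ω) s with h3 | h3
            · rw [hψ] at h; simp only at h; omega
            · rw [hψ] at h; simp only at h; omega
          omega
        · rintro ⟨h1, h2⟩
          have : φ ω = u := le_antisymm h1 h2
          rw [hψ]; simp only; omega
      rw [this]
      exact (hD u hu.le).diff (hDlt u (by omega))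
    · subst hu
      have : {ω | ψ ω = u} = ({ω | φ ω < u})ᶜ := by
        ext ω
        simp only [Set.mem_setOf_eq, Set.mem_compl_iff, not_lt, hψ]
        omega
      rw [this]
      exact (hDlt u (by omega)).compl
  -- the stopped process at time s
  set Ws : Ω → ℝ := fun ω => V (ψ ω) ω with hWs
  have hψmem : ∀ ω, ψ ω ∈ Finset.Icc t s := by
    intro ω
    rw [Finset.mem_Icc]
    refine ⟨le_min hts (le_min (hτmem ω).1 (hσmem ω).1), min_le_left _ _⟩
  have hWsum : Ws = fun ω => ∑ u ∈ Finset.Icc t s, Set.indicator {ω' | ψ ω' = u} (V u) ω := by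
    funext ω
    rw [hWs]
    simp only [Set.indicator_apply, Set.mem_setOf_eq]
    rw [Finset.sum_ite_eq (Finset.Icc t s) (ψ ω) (fun u => V u ω)]
    simp [hψmem ω]
  have hWm : StronglyMeasurable[ℱ s] Ws := by
    rw [hWsum]
    refine Finset.stronglyMeasurable_fun_sum _ ?_
    intro u hu
    have hus : u ≤ s := (Finset.mem_Icc.mp hu).2
    exact ((hVm u (hus.trans hsTle)).mono (ℱ.mono hus)).indicator (hC u hus)
  have hWi : Integrable Ws μ := by
    rw [hWsum]
    refine integrable_finset_sum _ ?_
    intro u hu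
    exact (hVi u).indicator (ℱ.le s _ (hC u (Finset.mem_Icc.mp hu).2))
  -- the event of being stopped by time s
  set A : Set Ω := {ω | φ ω ≤ s} with hA
  have hAm : MeasurableSet[ℱ s] A := hD s le_rfl
  -- decomposition of the process at time s+1
  have hdecomp : (fun ω => V (min (s + 1) (min (τs ω) (σs ω))) ω)
      = A.indicator Ws + Aᶜ.indicator (V (s + 1)) := by
    funext ω
    show V (min (s + 1) (φ ω)) ω = A.indicator Ws ω + Aᶜ.indicator (V (s + 1)) ω
    by_cases h : φ ω ≤ s
    · have hmA : ω ∈ A := h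
      have hmAc : ω ∉ Aᶜ := fun hc => hc hmA
      have h1 : min (s + 1) (φ ω) = φ ω := min_eq_right (by omega)
      have h2 : ψ ω = φ ω := min_eq_right h
      rw [Set.indicator_of_mem hmA, Set.indicator_of_notMem hmAc, add_zero, h1]
      show V (φ ω) ω = V (ψ ω) ω
      rw [h2]
    · have hmA : ω ∉ A := h
      have hmAc : ω ∈ Aᶜ := hmA
      have h1 : min (s + 1) (φ ω) = s + 1 := min_eq_left (by omega)
      rw [Set.indicator_of_notMem hmA, Set.indicator_of_mem hmAc, h1, zero_add]
  -- conditional expectations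
  have h1 : μ[fun ω => V (min (s + 1) (min (τs ω) (σs ω))) ω | ℱ s]
      =ᵐ[μ] μ[A.indicator Ws | ℱ s] + μ[Aᶜ.indicator (V (s + 1)) | ℱ s] := by
    rw [hdecomp]
    exact condExp_add (hWi.indicator (ℱ.le s _ hAm))
      ((hVi (s + 1)).indicator (ℱ.le s _ hAm.compl)) _
  have h2 : μ[A.indicator Ws | ℱ s] =ᵐ[μ] A.indicator Ws :=
    Filter.EventuallyEq.of_eq (condExp_of_stronglyMeasurable (ℱ.le s) (hWm.indicator hAm)
      (hWi.indicator (ℱ.le s _ hAm)))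
  have h3 : μ[Aᶜ.indicator (V (s + 1)) | ℱ s] =ᵐ[μ] Aᶜ.indicator (μ[V (s + 1) | ℱ s]) :=
    condExp_indicator (hVi (s + 1)) hAm.compl
  -- on the complement of A, the value process is a one-step martingale
  have hkey : ∀ ω, ¬ φ ω ≤ s → V s ω = (μ[V (s + 1) | ℱ s]) ω := by
    intro ω h
    have h' : s < φ ω := not_le.mp h
    have hτ : s < τs ω := lt_of_lt_of_le h' (min_le_left _ _)
    have hσ : s < σs ω := lt_of_lt_of_le h' (min_le_right _ _)
    have hX : V s ω ≠ X s ω := fun hc =>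
      absurd (hτle ω s hts hsTle hc) (not_le.mpr hτ)
    have hY : V s ω ≠ Y s ω := fun hc =>
      absurd (hσle ω s hts hsTle hc) (not_le.mpr hσ)
    have hrec := hV s hsT ω
    have hXY : X s ω ≤ Y s ω := (hXZ s ω).trans (hZY s ω)
    rcases le_or_gt ((μ[V (s + 1) | ℱ s]) ω) (X s ω) with hc | hc
    · rw [max_eq_left hc, min_eq_right hXY] at hrec
      exact absurd hrec hX
    rcases le_or_gt (Y s ω) ((μ[V (s + 1) | ℱ s]) ω) with hc2 | hc2
    · rw [max_eq_right hc.le, min_eq_left hc2] at hrec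
      exact absurd hrec hY
    · rw [max_eq_right hc.le, min_eq_right hc2.le] at hrec
      exact hrec
  have h4 : (A.indicator Ws + Aᶜ.indicator (μ[V (s + 1) | ℱ s]) : Ω → ℝ)
      = fun ω => V (min s (min (τs ω) (σs ω))) ω := by
    funext ω
    show A.indicator Ws ω + Aᶜ.indicator (μ[V (s + 1) | ℱ s]) ω = V (min s (φ ω)) ω
    by_cases h : φ ω ≤ s
    · have hmA : ω ∈ A := h
      have hmAc : ω ∉ Aᶜ := fun hc => hc hmA
      rw [Set.indicator_of_mem hmA, Set.indicator_of_notMem hmAc, add_zero]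
    · have hmA : ω ∉ A := h
      have hmAc : ω ∈ Aᶜ := hmA
      rw [Set.indicator_of_notMem hmA, Set.indicator_of_mem hmAc, zero_add]
      have hψs : min s (φ ω) = s := min_eq_left (by omega)
      rw [hψs]
      exact (hkey ω h).symm
  exact (h1.trans (h2.add h3)).trans (Filter.EventuallyEq.of_eq h4)
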